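/- (Stationarity of power transfer) Let P be a finite set, E := (P → ℝ) × (P → ℝ), and define f : E → ℝ by f(v,i) := Σ_{e∈P} v(e)·i(e). Let V ⊆ E be a subspace, a ∈ E, A := a + V, and (v₀,i₀) ∈ A. Then the Fréchet derivative of f at (v₀,i₀) vanishes on V (i.e. (v₀,i₀) is a stationary point of f restricted to the affine subspace A) if and only if (i₀,v₀) ∈ V^⊥. -/

import Mathlib

noncomputable section

open scoped BigOperators

/-- The inner product on `E = (P → ℝ) × (P → ℝ)`. -/
def ipE {P : Type*} [Fintype P] (x y : (P → ℝ) × (P → ℝ)) : ℝ :=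
  (∑ e, x.1 e * y.1 e) + ∑ e, x.2 e * y.2 e

/-- Orthogonal complement in `E` with respect to `ipE`. -/
def perpE {P : Type*} [Fintype P] (K : Set ((P → ℝ) × (P → ℝ))) :
    Set ((P → ℝ) × (P → ℝ)) :=
  {y | ∀ x ∈ K, ipE x y = 0}

lemma hasfd_power {P : Type*} [Fintype P] (x₀ : (P → ℝ) × (P → ℝ)) :
    HasFDerivAt (fun x : (P → ℝ) × (P → ℝ) => ∑ e, x.1 e * x.2 e)
      (∑ e : P, (x₀.1 e • ((ContinuousLinearMap.proj e).comp
          (ContinuousLinearMap.snd ℝ (P → ℝ) (P → ℝ)))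
        + x₀.2 e • ((ContinuousLinearMap.proj e).comp
          (ContinuousLinearMap.fst ℝ (P → ℝ) (P → ℝ))))) x₀ := by
  have := HasFDerivAt.fun_sum (u := Finset.univ) (fun e _ =>
    (((ContinuousLinearMap.proj e).comp
        (ContinuousLinearMap.fst ℝ (P → ℝ) (P → ℝ))).hasFDerivAt (x := x₀)).mul
     (((ContinuousLinearMap.proj e).comp
        (ContinuousLinearMap.snd ℝ (P → ℝ) (P → ℝ))).hasFDerivAt (x := x₀)))
  simpa using this

/-- Stationarity of power transfer: for `x₀ = (v₀,i₀) ∈ A = a + V`, the Fréchet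
derivative of the power `f(v,i) = Σ_e v(e)·i(e)` at `x₀` vanishes on `V` iff
`(i₀,v₀) ∈ V^⊥`. -/
theorem stmt19 (P : Type*) [Fintype P]
    (V : Submodule ℝ ((P → ℝ) × (P → ℝ))) (a x₀ : (P → ℝ) × (P → ℝ))
    (hx₀ : x₀ - a ∈ V) :
    (∀ y ∈ V,
        fderiv ℝ (fun x : (P → ℝ) × (P → ℝ) => ∑ e, x.1 e * x.2 e) x₀ y = 0)
      ↔ (x₀.2, x₀.1) ∈ perpE (V : Set ((P → ℝ) × (P → ℝ))) := by
  rw [(hasfd_power x₀).fderiv]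
  constructor <;> intro h y hy <;> have := h y hy <;>
    simpa [perpE, ipE, Finset.sum_add_distrib, mul_comm, add_comm] using this
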